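/- Let N ≥ 1, 0 ≤ r ≤ N-1, and let e_j be as in the previous context. Define T_0 = 1, T_m = 0 for m < 0, and suppose T satisfies the recursion T_m = Σ_{j=0}^{r} (-1)^j e_{N+1}^j e_{N-j} T_{m-j-1} for m > 0. Then the generating function T(t) = Σ_{m≥0} T_m t^m equals 1/((1 - (-1)^{N-1} t) · ∏_{p=1}^{r} (1 - (-1)^{N-1} x_p y t)). -/

import Mathlib

/- STATEMENT 3: With `e_j = (-1)^(j-1) [z^(N+1-j)]((y+z)(1+z x_1)⋯(1+z x_r))`
(`0 ≤ j ≤ N+1`, zero otherwise) over `ℚ(y,x_1,…,x_r)`, if `T_0 = 1`, `T_m = 0`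
for `m < 0` and `T_m = Σ_{j=0}^r (-1)^j e_{N+1}^j e_{N-j} T_{m-j-1}` for `m > 0`,
then `Σ_m T_m t^m = 1/((1-(-1)^(N-1) t) ∏_p (1-(-1)^(N-1) x_p y t))`. -/

open Polynomial

noncomputable abbrev KF (r : ℕ) : Type := FractionRing (MvPolynomial (Fin (r + 1)) ℚ)

noncomputable def yv (r : ℕ) : KF r :=
  algebraMap (MvPolynomial (Fin (r + 1)) ℚ) (KF r) (MvPolynomial.X 0)

noncomputable def xv (r : ℕ) (p : Fin r) : KF r :=
  algebraMap (MvPolynomial (Fin (r + 1)) ℚ) (KF r) (MvPolynomial.X p.succ)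

/-- The polynomial `(y+z)(1+z x_1)⋯(1+z x_r)` in the variable `z`. -/
noncomputable def Pz (r : ℕ) : Polynomial (KF r) :=
  (Polynomial.C (yv r) + Polynomial.X) *
    ∏ p : Fin r, (1 + Polynomial.C (xv r p) * Polynomial.X)

/-- `e_j = (-1)^(j-1) [z^(N+1-j)]((y+z)∏(1+z x_p))` for `0 ≤ j ≤ N+1`, else `0`. -/
noncomputable def elemE (N r : ℕ) (j : ℤ) : KF r :=
  if 0 ≤ j ∧ j ≤ (N : ℤ) + 1 then
    (-1 : KF r) ^ (j + 1).toNat * (Pz r).coeff (N + 1 - j.toNat)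
  else 0

lemma aux_comp_coeff {K : Type*} [Field K] (p : K[X]) (a : K) (k : ℕ) :
    (p.comp (C a * X)).coeff k = a ^ k * p.coeff k := by
  rw [comp_eq_sum_left]
  rw [Polynomial.sum, finset_sum_coeff]
  simp only [mul_pow, ← C_pow, ← mul_assoc, ← C_mul, coeff_C_mul, coeff_X_pow]
  rw [Finset.sum_eq_single k]
  · by_cases h : k ∈ p.support
    · simp [mul_comm]
    · simp [Polynomial.notMem_support_iff.mp h]
  · intro b _ hb; simp [Ne.symm hb]
  · intro h; simp [Polynomial.notMem_support_iff.mp h]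

lemma yv_ne_zero (r : ℕ) : yv r ≠ 0 := by
  rw [yv, Ne, IsFractionRing.to_map_eq_zero_iff]
  exact MvPolynomial.X_ne_zero 0

/-- the denominator polynomial -/
noncomputable def Dp (N r : ℕ) : Polynomial (KF r) :=
  (1 - C ((-1 : KF r) ^ (N - 1)) * X) *
    ∏ p : Fin r, (1 - C ((-1 : KF r) ^ (N - 1) * xv r p * yv r) * X)

lemma neg_eps (N r : ℕ) (hN : 1 ≤ N) :
    -((-1 : KF r) ^ (N - 1)) = (-1 : KF r) ^ N := by
  have : N = (N - 1) + 1 := by omega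
  rw [this]; simp [pow_succ]

lemma key_id (N r : ℕ) :
    C (yv r) * Dp N r = (Pz r).comp (C (-((-1 : KF r) ^ (N - 1)) * yv r) * X) := by
  rw [Pz, Dp, mul_comp, prod_comp, ← mul_assoc]
  congr 1
  · rw [add_comp, C_comp, X_comp]
    simp only [mul_sub, mul_one, ← mul_assoc, ← C_mul, ← C_neg]
    ring_nf
    simp [C_neg]
    ring
  · refine Finset.prod_congr rfl fun p _ => ?_
    rw [add_comp, one_comp, mul_comp, C_comp, X_comp]
    simp only [← mul_assoc, ← C_mul, ← C_neg]
    ring_nf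
    simp [C_neg]
    ring

lemma dcoeff (N r : ℕ) (k : ℕ) :
    yv r * (Dp N r).coeff k =
      (-((-1 : KF r) ^ (N - 1)) * yv r) ^ k * (Pz r).coeff k := by
  have h := congrArg (fun q => Polynomial.coeff q k) (key_id N r)
  rw [coeff_C_mul, aux_comp_coeff] at h
  exact h

lemma Pz_coeff_zero (r : ℕ) : (Pz r).coeff 0 = yv r := by
  simp [Pz, coeff_zero_eq_eval_zero, eval_prod]

lemma Pz_natDegree_le (r : ℕ) : (Pz r).natDegree ≤ r + 1 := by
  refine le_trans (natDegree_mul_le) ?_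
  have h1 : (C (yv r) + X).natDegree ≤ 1 :=
    le_trans (natDegree_add_le _ _) (by simp)
  have h2 : (∏ p : Fin r, (1 + C (xv r p) * X)).natDegree ≤ r := by
    refine le_trans (natDegree_prod_le _ _) ?_
    refine le_trans (Finset.sum_le_card_nsmul _ _ 1 ?_) (by simp)
    intro p _
    refine le_trans (natDegree_add_le _ _) ?_
    simp [natDegree_C_mul_le]
    exact le_trans (natDegree_C_mul_le _ _) (by simp)
  omega

lemma Dp_coeff_zero (N r : ℕ) : (Dp N r).coeff 0 = 1 := by
  have := dcoeff N r 0
  rw [pow_zero, one_mul, Pz_coeff_zero] at this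
  have hy := yv_ne_zero r
  field_simp at this
  exact this

lemma Dp_coeff_big (N r k : ℕ) (hk : r + 1 < k) : (Dp N r).coeff k = 0 := by
  have h0 : (Pz r).coeff k = 0 :=
    coeff_eq_zero_of_natDegree_lt (lt_of_le_of_lt (Pz_natDegree_le r) hk)
  have := dcoeff N r k
  rw [h0, mul_zero] at this
  exact (mul_eq_zero.mp this).resolve_left (yv_ne_zero r)

lemma elemE_top (N r : ℕ) : elemE N r ((N : ℤ) + 1) = (-1 : KF r) ^ N * yv r := by
  rw [elemE, if_pos ⟨by positivity, le_refl _⟩]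
  have h1 : ((N : ℤ) + 1 + 1).toNat = N + 2 := by omega
  have h2 : ((N : ℤ) + 1).toNat = N + 1 := by omega
  rw [h1, h2, Nat.sub_self, Pz_coeff_zero]
  congr 1
  rw [pow_add]; simp

lemma elemE_mid (N r : ℕ) (j : ℕ) (hj : j ≤ N) :
    elemE N r ((N : ℤ) - j) = (-1 : KF r) ^ (N + j + 1) * (Pz r).coeff (j + 1) := by
  rw [elemE, if_pos ⟨by omega, by omega⟩]
  have h1 : ((N : ℤ) - j + 1).toNat = N - j + 1 := by omega
  have h2 : ((N : ℤ) - j).toNat = N - j := by omega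
  have h3 : N + 1 - (N - j) = j + 1 := by omega
  rw [h1, h2, h3]
  congr 1
  have h4 : N + j + 1 = (N - j + 1) + 2 * j := by omega
  have h5 : ((-1 : KF r)) ^ (N + j + 1) = (-1) ^ (N - j + 1) := by
    rw [h4, pow_add, pow_mul, neg_one_sq, one_pow, mul_one]
  rw [h5]


theorem genFun_of_recursion (N r : ℕ) (hN : 1 ≤ N) (hr : r ≤ N - 1)
    (T : ℤ → KF r) (hT0 : T 0 = 1) (hTneg : ∀ m : ℤ, m < 0 → T m = 0)
    (hrec : ∀ m : ℤ, 0 < m →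
      T m = ∑ j ∈ Finset.range (r + 1),
        (-1 : KF r) ^ j * elemE N r ((N : ℤ) + 1) ^ j * elemE N r ((N : ℤ) - j) *
          T (m - j - 1)) :
    PowerSeries.mk (fun m : ℕ => T m)
      = ((1 - PowerSeries.C (R := KF r) ((-1) ^ (N - 1)) * PowerSeries.X) *
          ∏ p : Fin r,
            (1 - PowerSeries.C (R := KF r) ((-1) ^ (N - 1) * xv r p * yv r) * PowerSeries.X))⁻¹ := by
  have hy := yv_ne_zero r
  -- the recursion coefficients are (up to sign) the coefficients of `Dp N r`
  have hterm : ∀ j : ℕ, j ≤ r →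
      (-1 : KF r) ^ j * elemE N r ((N : ℤ) + 1) ^ j * elemE N r ((N : ℤ) - j)
        = -(Dp N r).coeff (j + 1) := by
    intro j hj
    have hjN : j ≤ N := by omega
    rw [elemE_top, elemE_mid N r j hjN]
    refine mul_left_cancel₀ hy ?_
    rw [mul_neg, dcoeff, neg_eps N r hN]
    have hsig : (-1 : KF r) ^ j * (-1 : KF r) ^ (N + j + 1) = -(-1 : KF r) ^ N := by
      rw [← pow_add]
      have h : j + (N + j + 1) = 2 * j + (N + 1) := by ring
      rw [h, pow_add, pow_mul, neg_one_sq, one_pow, one_mul, pow_succ]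
      ring
    rw [mul_pow]
    linear_combination (yv r * (((-1 : KF r) ^ N) ^ j * (yv r) ^ j) *
      (Pz r).coeff (j + 1)) * hsig
  -- the recursion, rewritten
  have hrec' : ∀ n : ℤ, 0 < n →
      T n + ∑ j ∈ Finset.range (r + 1), (Dp N r).coeff (j + 1) * T (n - j - 1) = 0 := by
    intro n hn
    rw [hrec n hn, ← Finset.sum_add_distrib]
    refine Finset.sum_eq_zero fun j hj => ?_
    rw [hterm j (by simpa [Nat.lt_succ_iff] using hj)]
    ring
  -- identifying the denominator with the coercion of `Dp N r`
  have hDcoe : ((Dp N r : Polynomial (KF r)) : PowerSeries (KF r)) =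
      (1 - PowerSeries.C (R := KF r) ((-1) ^ (N - 1)) * PowerSeries.X) *
        ∏ p : Fin r,
          (1 - PowerSeries.C (R := KF r) ((-1) ^ (N - 1) * xv r p * yv r) * PowerSeries.X) := by
    have hC : ∀ a : KF r, coeToPowerSeries.ringHom (C a) = PowerSeries.C (R := KF r) a := by
      intro a; rw [coeToPowerSeries.ringHom_apply, Polynomial.coe_C]
    have hX : coeToPowerSeries.ringHom (X : Polynomial (KF r)) = PowerSeries.X := by
      rw [coeToPowerSeries.ringHom_apply, Polynomial.coe_X]
    rw [Dp, ← coeToPowerSeries.ringHom_apply, map_mul, map_prod]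
    simp only [map_sub, map_mul, map_one, hC, hX]
  have hconst : PowerSeries.constantCoeff (R := KF r)
      ((1 - PowerSeries.C (R := KF r) ((-1) ^ (N - 1)) * PowerSeries.X) *
        ∏ p : Fin r,
          (1 - PowerSeries.C (R := KF r) ((-1) ^ (N - 1) * xv r p * yv r) * PowerSeries.X)) ≠ 0 := by
    rw [← hDcoe]
    have h0 : PowerSeries.constantCoeff (R := KF r) ((Dp N r : Polynomial (KF r)) : PowerSeries (KF r))
        = (Dp N r).coeff 0 := by
      rw [← PowerSeries.coeff_zero_eq_constantCoeff_apply, Polynomial.coeff_coe]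
    rw [h0, Dp_coeff_zero]
    exact one_ne_zero
  rw [PowerSeries.eq_inv_iff_mul_eq_one hconst, ← hDcoe, mul_comm]
  ext n
  rw [PowerSeries.coeff_mul, Finset.Nat.sum_antidiagonal_eq_sum_range_succ_mk]
  simp only [Polynomial.coeff_coe, PowerSeries.coeff_mk]
  cases n with
  | zero => simp [Dp_coeff_zero, hT0]
  | succ m =>
    rw [PowerSeries.coeff_one, if_neg (Nat.succ_ne_zero m)]
    rw [Finset.sum_range_succ']
    have hext : ∑ i ∈ Finset.range (m + 1),
          (Dp N r).coeff (i + 1) * T (((m + 1 - (i + 1) : ℕ) : ℤ))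
        = ∑ j ∈ Finset.range (r + 1), (Dp N r).coeff (j + 1) * T (((m + 1 : ℕ) : ℤ) - j - 1) := by
      have e0 : ∑ i ∈ Finset.range (m + 1),
            (Dp N r).coeff (i + 1) * T (((m + 1 - (i + 1) : ℕ) : ℤ))
          = ∑ i ∈ Finset.range (m + 1),
            (Dp N r).coeff (i + 1) * T (((m + 1 : ℕ) : ℤ) - i - 1) := by
        refine Finset.sum_congr rfl fun i hi => ?_
        rw [Finset.mem_range] at hi
        have hc : ((m + 1 - (i + 1) : ℕ) : ℤ) = ((m + 1 : ℕ) : ℤ) - i - 1 := by omega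
        rw [hc]
      have e1 : ∑ i ∈ Finset.range (m + 1),
            (Dp N r).coeff (i + 1) * T (((m + 1 : ℕ) : ℤ) - i - 1)
          = ∑ i ∈ Finset.range (max (m + 1) (r + 1)),
            (Dp N r).coeff (i + 1) * T (((m + 1 : ℕ) : ℤ) - i - 1) := by
        refine Finset.sum_subset (Finset.range_subset_range.mpr (le_max_left _ _)) ?_
        intro i hi hni
        rw [Finset.mem_range] at hi
        rw [Finset.mem_range, not_lt] at hni
        rw [hTneg _ (by push_cast; omega), mul_zero]
      have e2 : ∑ j ∈ Finset.range (r + 1),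
            (Dp N r).coeff (j + 1) * T (((m + 1 : ℕ) : ℤ) - j - 1)
          = ∑ i ∈ Finset.range (max (m + 1) (r + 1)),
            (Dp N r).coeff (i + 1) * T (((m + 1 : ℕ) : ℤ) - i - 1) := by
        refine Finset.sum_subset (Finset.range_subset_range.mpr (le_max_right _ _)) ?_
        intro i hi hni
        rw [Finset.mem_range, not_lt] at hni
        rw [Dp_coeff_big N r (i + 1) (by omega), zero_mul]
      rw [e0, e1, e2]
    rw [hext, Dp_coeff_zero]
    have hmain := hrec' ((m + 1 : ℕ) : ℤ) (by positivity)
    push_cast at hmain ⊢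
    linear_combination hmain
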